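/- Let G and H be simple graphs on n vertices. Then H can be obtained from G by a finite sequence of vertex flippings if and only if there is a bijection φ from the vertex set of G to the vertex set of H such that for all distinct vertices u, v, w of G, the triple {u, v, w} is a frustrated triangle of G if and only if {φ(u), φ(v), φ(w)} is a frustrated triangle of H. -/

import Mathlib

open Finset

open Classical in
/-- A triple of distinct vertices is *frustrated* if it induces an odd number of edges. -/
noncomputable def frustrated {V : Type*} (G : SimpleGraph V) (u v w : V) : Prop :=
  Odd ((if G.Adj u v then 1 else 0) + (if G.Adj u w then 1 else 0) +
       (if G.Adj v w then 1 else 0) : ℕ)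

/-- The number of frustrated triangles of `G`: the number of 3-element vertex subsets
inducing an odd number of edges. -/
noncomputable def fCount {V : Type*} [Fintype V] [DecidableEq V] (G : SimpleGraph V) : ℕ := by
  classical
  exact ((Finset.univ.powersetCard 3).filter
    (fun s : Finset V => ∃ u v w : V, u ≠ v ∧ u ≠ w ∧ v ≠ w ∧ s = {u, v, w} ∧
      frustrated G u v w)).card

/-- The graph obtained from `G` by flipping the vertex `v`, i.e. toggling the
edge/nonedge status of every pair `{u, v}` with `u ≠ v`. -/
def flipVertex {V : Type*} (G : SimpleGraph V) (v : V) : SimpleGraph V where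
  Adj u w := u ≠ w ∧ ((u = v ∨ w = v) ↔ ¬ G.Adj u w)
  symm := by
    constructor
    intro u w h
    obtain ⟨h1, h2⟩ := h
    refine ⟨h1.symm, ?_⟩
    rw [or_comm, SimpleGraph.adj_comm]
    exact h2
  loopless := ⟨fun u h => h.1 rfl⟩

lemma frustrated_iff {V : Type*} (G : SimpleGraph V) (u v w : V) :
    frustrated G u v w ↔ (G.Adj u v ↔ (G.Adj u w ↔ G.Adj v w)) := by
  classical
  unfold frustrated
  by_cases h1 : G.Adj u v <;> by_cases h2 : G.Adj u w <;> by_cases h3 : G.Adj v w <;>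
    simp [h1, h2, h3] <;> decide

lemma flipVertex_adj {V : Type*} (G : SimpleGraph V) (v u w : V) :
    (flipVertex G v).Adj u w ↔ u ≠ w ∧ ((u = v ∨ w = v) ↔ ¬ G.Adj u w) := Iff.rfl

def switchSet {V : Type*} (G : SimpleGraph V) (S : Set V) : SimpleGraph V where
  Adj u w := u ≠ w ∧ ((u ∈ S ↔ w ∈ S) ↔ G.Adj u w)
  symm := ⟨fun u w h => ⟨h.1.symm, by rw [G.adj_comm]; tauto⟩⟩
  loopless := ⟨fun u h => h.1 rfl⟩

lemma switchSet_adj {V : Type*} (G : SimpleGraph V) (S : Set V) (u w : V) :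
    (switchSet G S).Adj u w ↔ u ≠ w ∧ ((u ∈ S ↔ w ∈ S) ↔ G.Adj u w) := Iff.rfl

lemma switchSet_empty {V : Type*} (G : SimpleGraph V) : switchSet G (∅ : Set V) = G := by
  ext x y
  simp only [switchSet_adj, Set.mem_empty_iff_false]
  constructor
  · rintro ⟨-, h⟩; tauto
  · intro h; exact ⟨G.ne_of_adj h, by tauto⟩

lemma switchSet_insert {V : Type*} [DecidableEq V] (G : SimpleGraph V) (S : Finset V)
    (a : V) (ha : a ∉ S) :
    switchSet G ↑(insert a S) = flipVertex (switchSet G ↑S) a := by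
  ext x y
  by_cases hxy : x = y
  · subst hxy; simp [switchSet_adj, flipVertex_adj]
  · simp only [switchSet_adj, flipVertex_adj, Finset.coe_insert, Set.mem_insert_iff,
      Finset.mem_coe, ne_eq, hxy, not_false_eq_true, true_and]
    by_cases hx : x = a <;> by_cases hy : y = a
    · exact absurd (hx.trans hy.symm) hxy
    · subst hx; simp [ha, hy]; tauto
    · subst hy; simp [ha, hx]; tauto
    · simp [hx, hy]

lemma reach_switch {n : ℕ} (G : SimpleGraph (Fin n)) (S : Finset (Fin n)) :
    Relation.ReflTransGen (fun A B : SimpleGraph (Fin n) => ∃ v : Fin n, B = flipVertex A v)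
      G (switchSet G ↑S) := by
  classical
  induction S using Finset.induction_on with
  | empty => rw [show ((∅ : Finset (Fin n)) : Set (Fin n)) = (∅ : Set (Fin n)) by simp,
      switchSet_empty]
  | @insert a S ha ih =>
      exact ih.tail ⟨a, switchSet_insert G S a ha⟩

lemma frustrated_flip {V : Type*} (G : SimpleGraph V) (a u v w : V)
    (huv : u ≠ v) (huw : u ≠ w) (hvw : v ≠ w) :
    frustrated (flipVertex G a) u v w ↔ frustrated G u v w := by
  rw [frustrated_iff, frustrated_iff]
  simp only [flipVertex_adj, ne_eq, huv, huw, hvw, not_false_eq_true, true_and]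
  by_cases hu : u = a <;> by_cases hv : v = a <;> by_cases hw : w = a <;>
    simp_all <;> tauto

lemma frustrated_iso {V W : Type*} {G : SimpleGraph V} {H : SimpleGraph W} (f : G ≃g H)
    (u v w : V) : frustrated G u v w ↔ frustrated H (f u) (f v) (f w) := by
  rw [frustrated_iff, frustrated_iff, f.map_adj_iff, f.map_adj_iff, f.map_adj_iff]

lemma frustrated_rtg {n : ℕ} {G G' : SimpleGraph (Fin n)}
    (h : Relation.ReflTransGen (fun A B : SimpleGraph (Fin n) => ∃ v : Fin n, B = flipVertex A v)
      G G') (u v w : Fin n) (huv : u ≠ v) (huw : u ≠ w) (hvw : v ≠ w) :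
    frustrated G u v w ↔ frustrated G' u v w := by
  induction h with
  | refl => exact Iff.rfl
  | tail _ hstep ih =>
      obtain ⟨a, rfl⟩ := hstep
      exact ih.trans (frustrated_flip _ a u v w huv huw hvw).symm

lemma exists_switch {n : ℕ} (G H : SimpleGraph (Fin n))
    (hfr : ∀ u v w : Fin n, u ≠ v → u ≠ w → v ≠ w →
      (frustrated G u v w ↔ frustrated H u v w)) :
    ∃ S : Finset (Fin n), H = switchSet G ↑S := by
  classical
  rcases Nat.eq_zero_or_pos n with hn | hn
  · subst hn
    exact ⟨∅, by ext x y; exact x.elim0⟩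
  · obtain ⟨a, -⟩ : ∃ a : Fin n, True := ⟨⟨0, hn⟩, trivial⟩
    refine ⟨Finset.univ.filter (fun x => ¬(G.Adj a x ↔ H.Adj a x)), ?_⟩
    ext x y
    simp only [switchSet_adj, Finset.coe_filter, Finset.mem_univ, true_and,
      Set.mem_setOf_eq]
    by_cases hxy : x = y
    · subst hxy; simp
    · by_cases hx : x = a
      · subst hx
        have hne : H.Adj x y → x ≠ y := fun h => H.ne_of_adj h
        by_cases g : G.Adj x y <;> by_cases e : H.Adj x y <;>
          simp_all [SimpleGraph.irrefl]
      · by_cases hy : y = a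
        · subst hy
          have hne : H.Adj x y → x ≠ y := fun h => H.ne_of_adj h
          rw [show G.Adj x y ↔ G.Adj y x from G.adj_comm x y] at *
          rw [show H.Adj x y ↔ H.Adj y x from H.adj_comm x y] at *
          by_cases g : G.Adj y x <;> by_cases e : H.Adj y x <;>
            simp_all [SimpleGraph.irrefl]
        · have h := hfr a x y (Ne.symm hx) (Ne.symm hy) hxy
          rw [frustrated_iff, frustrated_iff] at h
          simp only [ne_eq, hxy, not_false_eq_true, true_and]
          by_cases g1 : G.Adj a x <;> by_cases g2 : G.Adj a y <;>
            by_cases g3 : G.Adj x y <;> by_cases e1 : H.Adj a x <;>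
            by_cases e2 : H.Adj a y <;> simp_all

theorem flip_equivalence_iff_frustration_preserving_bijection
    (n : ℕ) (G H : SimpleGraph (Fin n)) :
    (∃ G' : SimpleGraph (Fin n),
      Relation.ReflTransGen (fun A B : SimpleGraph (Fin n) => ∃ v : Fin n, B = flipVertex A v)
        G G' ∧ Nonempty (G' ≃g H)) ↔
    ∃ φ : Fin n ≃ Fin n, ∀ u v w : Fin n, u ≠ v → u ≠ w → v ≠ w →
      (frustrated G u v w ↔ frustrated H (φ u) (φ v) (φ w)) := by
  constructor
  · rintro ⟨G', hrel, ⟨f⟩⟩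
    exact ⟨f.toEquiv, fun u v w h1 h2 h3 =>
      (frustrated_rtg hrel u v w h1 h2 h3).trans (frustrated_iso f u v w)⟩
  · rintro ⟨φ, hφ⟩
    classical
    set H' : SimpleGraph (Fin n) := SimpleGraph.comap (⇑φ) H with hH'
    let hiso : H' ≃g H := { toEquiv := φ, map_rel_iff' := Iff.rfl }
    have hfr : ∀ u v w : Fin n, u ≠ v → u ≠ w → v ≠ w →
        (frustrated G u v w ↔ frustrated H' u v w) := by
      intro u v w h1 h2 h3
      have h4 := (frustrated_iso hiso u v w).symm
      rw [show (⇑hiso : Fin n → Fin n) = ⇑φ from rfl] at h4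
      exact (hφ u v w h1 h2 h3).trans h4
    obtain ⟨S, hS⟩ := exists_switch G H' hfr
    exact ⟨H', hS ▸ reach_switch G S, ⟨hiso⟩⟩
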